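/- Let S ∈ ℝ^{n×m}, y ∈ ℝ^n, Z ∈ ℝ^{n×k}, with S^T M_Z S positive definite and (S y)^T M_Z (S y) positive definite. If λ_min(S^T(P_Z − (κ−1)M_Z)S) ≥ 0 > λ_min((S y)^T(P_Z − (κ−1)M_Z)(S y)) for some κ ∈ ℝ, then det((S y)^T(P_Z − (κ−1)M_Z)(S y)) ≤ 0, and consequently the Schur complement s(κ) := y^T(Id − κM_Z)y − y^T(Id − κM_Z)S(S^T(Id − κM_Z)S)^{-1}S^T(Id − κM_Z)y satisfies s(κ) ≤ 0. -/

import Mathlib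

open Matrix

/-- if `λ_min(Sᵀ(Id−κM_Z)S) ≥ 0 > λ_min((S y)ᵀ(Id−κM_Z)(S y))`
(encoded through quadratic forms), then `det((S y)ᵀ(Id−κM_Z)(S y)) ≤ 0` and the Schur
complement `s(κ) = yᵀ(Id−κM_Z)y − yᵀ(Id−κM_Z)S(Sᵀ(Id−κM_Z)S)⁻¹Sᵀ(Id−κM_Z)y` is ≤ 0. -/
theorem stmt_11 {n m k : ℕ}
    (S : Matrix (Fin n) (Fin m) ℝ) (y : Fin n → ℝ) (Z : Matrix (Fin n) (Fin k) ℝ)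
    (P : Matrix (Fin n) (Fin n) ℝ)
    (hPsymm : P.IsSymm) (hPidem : P * P = P) (hPZ : P * Z = Z)
    (hPrange : ∃ C : Matrix (Fin k) (Fin n) ℝ, P = Z * C)
    (hSM : (Sᵀ * ((1 : Matrix (Fin n) (Fin n) ℝ) - P) * S).PosDef)
    (Sy : Matrix (Fin n) (Fin m ⊕ Unit) ℝ)
    (hSy : Sy = Matrix.of fun i => Sum.elim (fun j => S i j) (fun _ => y i))
    (hSyM : (Syᵀ * ((1 : Matrix (Fin n) (Fin n) ℝ) - P) * Sy).PosDef)
    (κ : ℝ)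
    (A : Matrix (Fin n) (Fin n) ℝ)
    (hA : A = (1 : Matrix (Fin n) (Fin n) ℝ) - κ • ((1 : Matrix (Fin n) (Fin n) ℝ) - P))
    (h1 : (Sᵀ * A * S).PosSemidef)
    (h2 : ∃ v : Fin m ⊕ Unit → ℝ, v ≠ 0 ∧ v ⬝ᵥ (Syᵀ * A * Sy) *ᵥ v < 0)
    (hinv : IsUnit (Sᵀ * A * S).det) :
    (Syᵀ * A * Sy).det ≤ 0 ∧
    y ⬝ᵥ A *ᵥ y - y ⬝ᵥ A *ᵥ (S *ᵥ (((Sᵀ * A * S)⁻¹ * (Sᵀ * A)) *ᵥ y)) ≤ 0 := by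
  have hAsymm : Aᵀ = A := by
    rw [hA]
    simp [transpose_sub, transpose_smul, hPsymm.eq]
  set C := Sᵀ * A * S with hC
  have hCsymm : Cᵀ = C := by
    rw [hC, Matrix.transpose_mul, Matrix.transpose_mul, Matrix.transpose_transpose, hAsymm,
      Matrix.mul_assoc]
  have hCC : C * C⁻¹ = 1 := Matrix.mul_nonsing_inv _ hinv
  have hCC' : C⁻¹ * C = 1 := Matrix.nonsing_inv_mul _ hinv
  -- symmetry of quadratic forms
  have hsymA : ∀ x z : Fin n → ℝ, x ⬝ᵥ A *ᵥ z = z ⬝ᵥ A *ᵥ x := by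
    intro x z
    nth_rewrite 1 [← hAsymm]
    rw [Matrix.mulVec_transpose, dotProduct_comm, ← Matrix.dotProduct_mulVec]
  have hCiSymm : (C⁻¹)ᵀ = C⁻¹ := by
    rw [Matrix.transpose_nonsing_inv, hCsymm]
  have hsymC : ∀ x z : Fin m → ℝ, x ⬝ᵥ C *ᵥ z = z ⬝ᵥ C *ᵥ x := by
    intro x z
    nth_rewrite 1 [← hCsymm]
    rw [Matrix.mulVec_transpose, dotProduct_comm, ← Matrix.dotProduct_mulVec]
  have hgen : ∀ (p : Type) (_ : Fintype p) (M : Matrix (Fin n) p ℝ) (u : p → ℝ) (z : Fin n → ℝ),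
      (M *ᵥ u) ⬝ᵥ (A *ᵥ z) = u ⬝ᵥ (Mᵀ * A) *ᵥ z := by
    intro p _ M u z
    rw [Matrix.dotProduct_mulVec, Matrix.dotProduct_mulVec, Matrix.vecMul_mulVec]
  set b : Fin m → ℝ := (Sᵀ * A) *ᵥ y with hb
  set c : ℝ := y ⬝ᵥ A *ᵥ y with hc
  set s : ℝ := c - b ⬝ᵥ (C⁻¹ *ᵥ b) with hs
  -- expansion of the quadratic form
  have hexp : ∀ u : Fin m → ℝ,
      (S *ᵥ u + y) ⬝ᵥ A *ᵥ (S *ᵥ u + y) = u ⬝ᵥ C *ᵥ u + 2 * (u ⬝ᵥ b) + c := by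
    intro u
    have e1 : (S *ᵥ u) ⬝ᵥ A *ᵥ (S *ᵥ u) = u ⬝ᵥ C *ᵥ u := by
      rw [hgen _ _ S u]
      simp [Matrix.mulVec_mulVec, Matrix.mul_assoc, hC]
    have e2 : (S *ᵥ u) ⬝ᵥ A *ᵥ y = u ⬝ᵥ b := by
      rw [hgen _ _ S u, hb]
    have e3 : y ⬝ᵥ A *ᵥ (S *ᵥ u) = u ⬝ᵥ b := by rw [hsymA, e2]
    rw [Matrix.mulVec_add, dotProduct_add, add_dotProduct, add_dotProduct, e1, e2, e3, ← hc]
    ring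
  -- completion of square: s ≤ quadratic
  have hkey : ∀ u : Fin m → ℝ, s ≤ u ⬝ᵥ C *ᵥ u + 2 * (u ⬝ᵥ b) + c := by
    intro u
    have hw := (posSemidef_iff_dotProduct_mulVec.1 h1).2 (u + C⁻¹ *ᵥ b)
    simp only [star_trivial] at hw
    have e1 : C *ᵥ (C⁻¹ *ᵥ b) = b := by
      rw [Matrix.mulVec_mulVec, hCC, Matrix.one_mulVec]
    have e2 : (C⁻¹ *ᵥ b) ⬝ᵥ C *ᵥ u = u ⬝ᵥ b := by
      rw [hsymC, e1]
    rw [Matrix.mulVec_add, dotProduct_add, add_dotProduct, add_dotProduct, e1, e2,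
      dotProduct_comm (C⁻¹ *ᵥ b) b] at hw
    have : u ⬝ᵥ C *ᵥ u + u ⬝ᵥ b + (u ⬝ᵥ b + b ⬝ᵥ (C⁻¹ *ᵥ b)) =
        (u ⬝ᵥ C *ᵥ u + 2 * (u ⬝ᵥ b) + c) - s := by rw [hs]; ring
    rw [this] at hw
    linarith
  -- extract negative direction
  obtain ⟨v, hv0, hvneg⟩ := h2
  set u : Fin m → ℝ := fun j => v (Sum.inl j) with hu
  set t : ℝ := v (Sum.inr ()) with ht
  have hSyv : Sy *ᵥ v = S *ᵥ u + t • y := by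
    ext i
    simp only [hSy, Matrix.mulVec, dotProduct, Fintype.sum_sum_type, Pi.add_apply,
      Pi.smul_apply, smul_eq_mul, Matrix.of_apply, Sum.elim_inl, Sum.elim_inr]
    simp [mul_comm, Matrix.mulVec, dotProduct]
    rfl
  have hq : (S *ᵥ u + t • y) ⬝ᵥ A *ᵥ (S *ᵥ u + t • y) < 0 := by
    have : (Sy *ᵥ v) ⬝ᵥ A *ᵥ (Sy *ᵥ v) = v ⬝ᵥ (Syᵀ * A * Sy) *ᵥ v := by
      rw [hgen _ _ Sy v]
      simp [Matrix.mulVec_mulVec, Matrix.mul_assoc]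
    rw [← this, hSyv] at hvneg
    exact hvneg
  have hsneg : s < 0 := by
    by_cases htz : t = 0
    · exfalso
      rw [htz, zero_smul, add_zero] at hq
      have := (posSemidef_iff_dotProduct_mulVec.1 h1).2 u
      simp only [star_trivial] at this
      have e1 : (S *ᵥ u) ⬝ᵥ A *ᵥ (S *ᵥ u) = u ⬝ᵥ C *ᵥ u := by
        rw [hgen _ _ S u]
        simp [Matrix.mulVec_mulVec, Matrix.mul_assoc, hC]
      rw [e1] at hq
      linarith
    · set u' : Fin m → ℝ := t⁻¹ • u with hu'
      have hscale : S *ᵥ u + t • y = t • (S *ᵥ u' + y) := by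
        rw [hu', smul_add, Matrix.mulVec_smul, smul_smul, mul_inv_cancel₀ htz, one_smul]
      rw [hscale] at hq
      have hq2 : t ^ 2 * ((S *ᵥ u' + y) ⬝ᵥ A *ᵥ (S *ᵥ u' + y)) < 0 := by
        have : (t • (S *ᵥ u' + y)) ⬝ᵥ A *ᵥ (t • (S *ᵥ u' + y)) =
            t ^ 2 * ((S *ᵥ u' + y) ⬝ᵥ A *ᵥ (S *ᵥ u' + y)) := by
          simp only [Matrix.mulVec_smul, smul_dotProduct, dotProduct_smul, smul_eq_mul]
          ring
        rw [this] at hq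
        exact hq
      have ht2 : 0 < t ^ 2 := by positivity
      have hqneg : (S *ᵥ u' + y) ⬝ᵥ A *ᵥ (S *ᵥ u' + y) < 0 := by
        nlinarith
      rw [hexp u'] at hqneg
      exact lt_of_le_of_lt (hkey u') hqneg
  -- the Schur complement expression equals s
  have hval : y ⬝ᵥ A *ᵥ y - y ⬝ᵥ A *ᵥ (S *ᵥ (((Sᵀ * A * S)⁻¹ * (Sᵀ * A)) *ᵥ y)) = s := by
    have e0 : ((Sᵀ * A * S)⁻¹ * (Sᵀ * A)) *ᵥ y = C⁻¹ *ᵥ b := by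
      rw [hb, ← Matrix.mulVec_mulVec, hC]
    have e1 : y ⬝ᵥ A *ᵥ (S *ᵥ (C⁻¹ *ᵥ b)) = b ⬝ᵥ (C⁻¹ *ᵥ b) := by
      rw [hsymA, hgen _ _ S (C⁻¹ *ᵥ b) y, ← hb, dotProduct_comm]
    rw [e0, e1, hs, hc]
  refine ⟨?_, by rw [hval]; linarith⟩
  -- determinant part
  have hdetC : 0 ≤ C.det := by
    rw [h1.1.det_eq_prod_eigenvalues]
    have : ∀ i, (0:ℝ) ≤ h1.1.eigenvalues i := h1.eigenvalues_nonneg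
    push_cast
    exact Finset.prod_nonneg fun i _ => this i
  have hSyblock : Sy = fromCols S (Matrix.replicateCol Unit y) := by
    rw [hSy]
    ext i j
    cases j <;> rfl
  haveI : Invertible C := C.invertibleOfIsUnitDet hinv
  have hblock : Syᵀ * A * Sy = fromBlocks C (Sᵀ * A * Matrix.replicateCol Unit y)
      ((Matrix.replicateCol Unit y)ᵀ * A * S) ((Matrix.replicateCol Unit y)ᵀ * A * Matrix.replicateCol Unit y) := by
    rw [hSyblock, transpose_fromCols, Matrix.fromRows_mul, fromRows_mul_fromCols, hC]
  have hdet : (Syᵀ * A * Sy).det = C.det * s := by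
    rw [hblock, det_fromBlocks₁₁]
    congr 1
    rw [Matrix.det_unique, Matrix.invOf_eq_nonsing_inv, Matrix.sub_apply]
    have t1 : ((Matrix.replicateCol Unit y)ᵀ * A * Matrix.replicateCol Unit y) default default = c := by
      rw [Matrix.transpose_replicateCol, Matrix.mul_assoc, ← Matrix.replicateCol_mulVec, Matrix.replicateRow_mul_replicateCol_apply,
        hc]
    have t2 : ((Matrix.replicateCol Unit y)ᵀ * A * S * C⁻¹ * (Sᵀ * A * Matrix.replicateCol Unit y)) default default
        = b ⬝ᵥ (C⁻¹ *ᵥ b) := by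
      rw [Matrix.transpose_replicateCol, ← Matrix.replicateCol_mulVec (Sᵀ * A) y, ← hb,
        ← Matrix.replicateRow_vecMul, ← Matrix.replicateRow_vecMul, ← Matrix.replicateRow_vecMul,
        Matrix.replicateRow_mul_replicateCol_apply]
      have e : y ᵥ* A ᵥ* S ᵥ* C⁻¹ = C⁻¹ *ᵥ b := by
        rw [← Matrix.mulVec_transpose C⁻¹, ← Matrix.mulVec_transpose S,
          ← Matrix.mulVec_transpose A, hCiSymm, hAsymm]
        simp [hb, ← Matrix.mulVec_mulVec]
      rw [e, dotProduct_comm]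
    rw [t1, t2, hs]
  rw [hdet]
  exact mul_nonpos_of_nonneg_of_nonpos hdetC hsneg.le
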